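/- arXiv:2105.09604 — 8 statements merged into one kernel-verified Lean document; each statement's English description precedes it below -/
import Mathlib

section
/- In the category Eq of equivalence relations on ℕ (morphisms: quotient maps induced by computable equivalence-preserving functions), a morphism γ : R → S is a monomorphism if and only if the underlying map on equivalence classes is injective. -/
/-- `f` is `(R,S)`-equivalence preserving. -/
def EqvPres (R S : Setoid ℕ) (f : ℕ → ℕ) : Prop :=
  ∀ x y, R.r x y → S.r (f x) (f y)

/-- `α` is a morphism of the category `Eq` from `R` to `S`: a map on quotients
induced by a computable equivalence-preserving function. -/
def IsMor (R S : Setoid ℕ) (α : Quotient R → Quotient S) : Prop :=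
  ∃ f : ℕ → ℕ, Computable f ∧ EqvPres R S f ∧
    ∀ x, α (Quotient.mk R x) = Quotient.mk S (f x)

/-- `γ` is a monomorphism in `Eq`. -/
def IsMono (R S : Setoid ℕ) (γ : Quotient R → Quotient S) : Prop :=
  ∀ (E : Setoid ℕ) (α β : Quotient E → Quotient R),
    IsMor E R α → IsMor E R β → γ ∘ α = γ ∘ β → α = β

/-- In `Eq`, a morphism is a monomorphism iff it is injective on equivalence classes. -/
theorem stmt_2 (R S : Setoid ℕ) (γ : Quotient R → Quotient S) (hγ : IsMor R S γ) :
    IsMono R S γ ↔ Function.Injective γ := by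
  constructor
  · intro hmono a b hab
    obtain ⟨x, rfl⟩ := Quotient.exists_rep a
    obtain ⟨y, rfl⟩ := Quotient.exists_rep b
    have hα : IsMor R R (fun _ => Quotient.mk R x) :=
      ⟨fun _ => x, Computable.const x, fun _ _ _ => R.refl x, fun _ => rfl⟩
    have hβ : IsMor R R (fun _ => Quotient.mk R y) :=
      ⟨fun _ => y, Computable.const y, fun _ _ _ => R.refl y, fun _ => rfl⟩
    have := hmono R (fun _ => Quotient.mk R x) (fun _ => Quotient.mk R y) hα hβ
      (funext fun _ => hab)
    exact congrFun this (Quotient.mk R 0)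
  · intro hinj E α β _ _ h
    funext q
    exact hinj (congrFun h q)
end

section
/- For equivalence relations R, S on ℕ, R is computably reducible to S (there is a computable f with x R y ↔ f(x) S f(y) for all x, y) if and only if there exists a monomorphism from R to S in the category Eq. -/
/-- `R` is computably reducible to `S` iff there is a monomorphism `R → S` in `Eq`. -/
theorem stmt_3 (R S : Setoid ℕ) :
    (∃ f : ℕ → ℕ, Computable f ∧ ∀ x y, R.r x y ↔ S.r (f x) (f y)) ↔
      ∃ μ : Quotient R → Quotient S, IsMor R S μ ∧ IsMono R S μ := by
  constructor
  · rintro ⟨f, hf, hiff⟩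
    refine ⟨fun q => Quotient.liftOn q (fun x => Quotient.mk S (f x))
      (fun a b hab => Quotient.sound ((hiff a b).1 hab)), ?_, ?_⟩
    · exact ⟨f, hf, fun x y h => (hiff x y).1 h, fun x => rfl⟩
    · rintro E α β ⟨g, hg, hgp, hga⟩ ⟨h, hh, hhp, hha⟩ hcomp
      funext q
      induction q using Quotient.ind with
      | _ x =>
        rw [hga, hha]
        have h1 := congrFun hcomp (Quotient.mk E x)
        simp only [Function.comp, hga, hha] at h1
        have h2 : Quotient.mk S (f (g x)) = Quotient.mk S (f (h x)) := h1
        exact Quotient.sound ((hiff _ _).2 (Quotient.exact h2))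
  · rintro ⟨μ, ⟨f, hf, hpres, hμ⟩, hmono⟩
    refine ⟨f, hf, fun x y => ⟨hpres x y, ?_⟩⟩
    intro hS
    let T : Setoid ℕ := ⟨fun _ _ => True, ⟨fun _ => trivial, fun _ => trivial, fun _ _ => trivial⟩⟩
    have heq := hmono T (fun _ => Quotient.mk R x) (fun _ => Quotient.mk R y)
      ⟨fun _ => x, Computable.const x, fun _ _ _ => R.refl x, fun _ => rfl⟩
      ⟨fun _ => y, Computable.const y, fun _ _ _ => R.refl y, fun _ => rfl⟩
      (by
        funext q
        simp only [Function.comp]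
        rw [hμ, hμ]
        exact Quotient.sound hS)
    exact Quotient.exact (congrFun heq (Quotient.mk T 0))
end

section
/- In the full subcategory Eq(Σ⁰₁) of c.e. equivalence relations (ceers), epimorphisms coincide with morphisms that are surjective on equivalence classes: if R, S are ceers and α : R → S is a morphism whose range omits some S-class, then there exist a ceer T and two distinct morphisms α₁, α₂ : S → T with α₁ ∘ α = α₂ ∘ α. -/
/-- An equivalence relation is a ceer if its graph is c.e. -/
def Ceer (R : Setoid ℕ) : Prop := REPred fun p : ℕ × ℕ => R.r p.1 p.2


open Nat.Partrec (Code)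
open Nat.Partrec.Code

theorem myRePred.comp {α β} [Primcodable α] [Primcodable β] {q : β → Prop} {g : α → β}
    (hq : REPred q) (hg : Computable g) : REPred fun a => q (g a) :=
  hq.comp hg

theorem myRePred.and {α} [Primcodable α] {p q : α → Prop} (hp : REPred p) (hq : REPred q) :
    REPred fun a => p a ∧ q a := by
  have h := hp.bind ((hq.comp (Computable.fst (β := Unit))).to₂)
  apply h.of_eq
  intro a
  apply Part.ext
  intro u
  simp [Part.mem_assert_iff, Part.mem_bind_iff]

theorem myRePred.ite {α} [Primcodable α] {c : α → Prop} [DecidablePred c] {p q : α → Prop}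
    (hc : Computable fun a => decide (c a)) (hp : REPred p) (hq : REPred q) :
    REPred fun a => if c a then p a else q a := by
  have h := Partrec.cond hc hp hq
  apply h.of_eq
  intro a
  by_cases hca : c a
  · show _ = Part.assert (if c a then p a else q a) fun _ => Part.some ()
    rw [if_pos hca]; simp [hca]
  · show _ = Part.assert (if c a then p a else q a) fun _ => Part.some ()
    rw [if_neg hca]; simp [hca]

theorem myRePred.exists {α} [Primcodable α] {p : α × ℕ → Prop}
    (hp : REPred p) : REPred fun a : α => ∃ n, p (a, n) := by
  obtain ⟨c, hc⟩ := exists_code.1 hp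
  have hev : ∀ x : α × ℕ, (eval c (Encodable.encode x)).Dom ↔ p x := by
    intro x
    rw [hc]
    simp [Part.assert]
  set g : α → ℕ → Option Unit := fun a m =>
    (evaln m.unpair.1 c (Encodable.encode (a, m.unpair.2))).map fun _ => () with hgdef
  have h1 : Primrec fun pr : α × ℕ =>
      evaln pr.2.unpair.1 c (Encodable.encode (pr.1, pr.2.unpair.2)) :=
    primrec_evaln.comp <|
      (((Primrec.fst.comp (Primrec.unpair.comp Primrec.snd)).pair (Primrec.const c)).pair
        (Primrec.encode.comp (Primrec.fst.pair
          (Primrec.snd.comp (Primrec.unpair.comp Primrec.snd)))))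
  have hg : Computable₂ g :=
    (Primrec.option_map h1 (((Primrec.const ()).comp Primrec.fst).to₂)).to_comp
  have h := (Partrec.rfindOpt hg).dom_re
  apply h.of_eq
  intro a
  rw [Nat.rfindOpt_dom]
  constructor
  · rintro ⟨m, u, hu⟩
    simp only [hgdef, Option.mem_def, Option.map_eq_some_iff] at hu
    obtain ⟨v, hv, -⟩ := hu
    have := evaln_sound hv
    exact ⟨m.unpair.2, (hev _).1 (Part.dom_iff_mem.2 ⟨_, this⟩)⟩
  · rintro ⟨n, hn⟩
    have hd : (eval c (Encodable.encode (a, n))).Dom := (hev _).2 hn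
    obtain ⟨v, hv⟩ := Part.dom_iff_mem.1 hd
    obtain ⟨k, hk⟩ := evaln_complete.1 hv
    refine ⟨Nat.pair k n, (), ?_⟩
    simp only [hgdef, Nat.unpair_pair, Option.mem_def, Option.map_eq_some_iff]
    exact ⟨v, hk, trivial⟩

/-- Two copies of `S` (even/odd), glued along the classes of elements `f n`. -/
def glueRel (S : Setoid ℕ) (f : ℕ → ℕ) (u v : ℕ) : Prop :=
  if u % 2 = v % 2 then S.r (u / 2) (v / 2)
  else ∃ n, S.r (u / 2) (f n) ∧ S.r (f n) (v / 2)

theorem glueRel_same {S : Setoid ℕ} {f : ℕ → ℕ} {u v : ℕ} (h : u % 2 = v % 2) :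
    glueRel S f u v ↔ S.r (u / 2) (v / 2) := by
  unfold glueRel; rw [if_pos h]

theorem glueRel_diff {S : Setoid ℕ} {f : ℕ → ℕ} {u v : ℕ} (h : ¬ u % 2 = v % 2) :
    glueRel S f u v ↔ ∃ n, S.r (u / 2) (f n) ∧ S.r (f n) (v / 2) := by
  unfold glueRel; rw [if_neg h]

theorem glueRel_equiv (S : Setoid ℕ) (f : ℕ → ℕ) : Equivalence (glueRel S f) := by
  constructor
  · intro u; exact (glueRel_same rfl).2 (S.iseqv.refl _)
  · intro u v h
    by_cases hp : u % 2 = v % 2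
    · exact (glueRel_same hp.symm).2 (S.iseqv.symm ((glueRel_same hp).1 h))
    · obtain ⟨n, h1, h2⟩ := (glueRel_diff hp).1 h
      exact (glueRel_diff (fun h' => hp h'.symm)).2 ⟨n, S.iseqv.symm h2, S.iseqv.symm h1⟩
  · intro u v w huv hvw
    by_cases h1 : u % 2 = v % 2 <;> by_cases h2 : v % 2 = w % 2
    · exact (glueRel_same (h1.trans h2)).2
        (S.iseqv.trans ((glueRel_same h1).1 huv) ((glueRel_same h2).1 hvw))
    · obtain ⟨n, ha, hb⟩ := (glueRel_diff h2).1 hvw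
      exact (glueRel_diff (fun h' => h2 (h1.symm.trans h'))).2
        ⟨n, S.iseqv.trans ((glueRel_same h1).1 huv) ha, hb⟩
    · obtain ⟨n, ha, hb⟩ := (glueRel_diff h1).1 huv
      exact (glueRel_diff (fun h' => h1 (h'.trans h2.symm))).2
        ⟨n, ha, S.iseqv.trans hb ((glueRel_same h2).1 hvw)⟩
    · obtain ⟨n, ha, hb⟩ := (glueRel_diff h1).1 huv
      obtain ⟨m, hc, hd⟩ := (glueRel_diff h2).1 hvw
      have hp : u % 2 = w % 2 := by omega
      exact (glueRel_same hp).2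
        (S.iseqv.trans ha (S.iseqv.trans hb (S.iseqv.trans hc hd)))

def glueSetoid (S : Setoid ℕ) (f : ℕ → ℕ) : Setoid ℕ :=
  ⟨glueRel S f, glueRel_equiv S f⟩

theorem glue_ceer {S : Setoid ℕ} {f : ℕ → ℕ} (hS : Ceer S) (hf : Computable f) :
    Ceer (glueSetoid S f) := by
  have hdiv1 : Primrec fun p : ℕ × ℕ => p.1 / 2 :=
    Primrec.nat_div.comp Primrec.fst (Primrec.const 2)
  have hdiv2 : Primrec fun p : ℕ × ℕ => p.2 / 2 :=
    Primrec.nat_div.comp Primrec.snd (Primrec.const 2)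
  have hc : Computable fun p : ℕ × ℕ => decide (p.1 % 2 = p.2 % 2) :=
    (Primrec.eq.comp (Primrec.nat_mod.comp Primrec.fst (Primrec.const 2))
      (Primrec.nat_mod.comp Primrec.snd (Primrec.const 2))).decide.to_comp
  have hp1 : REPred fun p : ℕ × ℕ => S.r (p.1 / 2) (p.2 / 2) :=
    myRePred.comp hS ((hdiv1.pair hdiv2).to_comp)
  have hq1 : REPred fun x : (ℕ × ℕ) × ℕ => S.r (x.1.1 / 2) (f x.2) ∧ S.r (f x.2) (x.1.2 / 2) := by
    have hA : Computable fun x : (ℕ × ℕ) × ℕ => (x.1.1 / 2, f x.2) :=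
      Computable.pair
        ((Primrec.nat_div.comp (Primrec.fst.comp Primrec.fst) (Primrec.const 2)).to_comp)
        (hf.comp Computable.snd)
    have hB : Computable fun x : (ℕ × ℕ) × ℕ => (f x.2, x.1.2 / 2) :=
      Computable.pair (hf.comp Computable.snd)
        ((Primrec.nat_div.comp (Primrec.snd.comp Primrec.fst) (Primrec.const 2)).to_comp)
    exact myRePred.and (myRePred.comp hS hA) (myRePred.comp hS hB)
  have hq : REPred fun p : ℕ × ℕ => ∃ n, S.r (p.1 / 2) (f n) ∧ S.r (f n) (p.2 / 2) :=
    myRePred.exists hq1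
  have := myRePred.ite (c := fun p : ℕ × ℕ => p.1 % 2 = p.2 % 2) hc hp1 hq
  apply this.of_eq
  intro p
  unfold glueSetoid glueRel
  simp only [Setoid.r]

/-- In `Eq(Σ⁰₁)` epimorphisms are exactly the surjective morphisms: a morphism of ceers
that omits some class from its range is not epi, as witnessed inside the ceers. -/
theorem stmt_6 (R S : Setoid ℕ) (hR : Ceer R) (hS : Ceer S)
    (α : Quotient R → Quotient S) (hα : IsMor R S α)
    (hnot : ∃ a : ℕ, Quotient.mk S a ∉ Set.range α) :
    ∃ (T : Setoid ℕ), Ceer T ∧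
      ∃ (α₁ α₂ : Quotient S → Quotient T),
        IsMor S T α₁ ∧ IsMor S T α₂ ∧ α₁ ≠ α₂ ∧ α₁ ∘ α = α₂ ∘ α := by
  obtain ⟨f, hf, hfp, hfm⟩ := hα
  obtain ⟨a, ha⟩ := hnot
  set T : Setoid ℕ := glueSetoid S f with hT
  have e1 : ∀ x : ℕ, 2 * x / 2 = x := fun x => by omega
  have e2 : ∀ x : ℕ, (2 * x + 1) / 2 = x := fun x => by omega
  have hpres1 : EqvPres S T fun x => 2 * x := by
    intro x y h
    show glueRel S f (2 * x) (2 * y)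
    rw [glueRel_same (by omega), e1, e1]; exact h
  have hpres2 : EqvPres S T fun x => 2 * x + 1 := by
    intro x y h
    show glueRel S f (2 * x + 1) (2 * y + 1)
    rw [glueRel_same (by omega), e2, e2]; exact h
  refine ⟨T, glue_ceer hS hf,
    Quotient.lift (fun x => Quotient.mk T (2 * x)) (fun x y h => Quotient.sound (hpres1 x y h)),
    Quotient.lift (fun x => Quotient.mk T (2 * x + 1)) (fun x y h => Quotient.sound (hpres2 x y h)),
    ⟨fun x => 2 * x, (Primrec.nat_mul.comp (Primrec.const 2) Primrec.id).to_comp,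
      hpres1, fun x => rfl⟩,
    ⟨fun x => 2 * x + 1,
      (Primrec.succ.comp (Primrec.nat_mul.comp (Primrec.const 2) Primrec.id)).to_comp,
      hpres2, fun x => rfl⟩, ?_, ?_⟩
  · intro h
    have h' := congrFun h (Quotient.mk S a)
    have h2 : glueRel S f (2 * a) (2 * a + 1) := Quotient.exact h'
    obtain ⟨n, h3, -⟩ := (glueRel_diff (by omega)).1 h2
    rw [e1] at h3
    exact ha ⟨Quotient.mk R n, (hfm n).trans (Quotient.sound (S.iseqv.symm h3))⟩
  · funext q
    induction q using Quotient.ind with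
    | _ x =>
      show Quotient.lift _ _ (α (Quotient.mk R x)) = Quotient.lift _ _ (α (Quotient.mk R x))
      rw [hfm x]
      show Quotient.mk T (2 * f x) = Quotient.mk T (2 * f x + 1)
      apply Quotient.sound
      show glueRel S f _ _
      rw [glueRel_diff (by omega), e1, e2]
      exact ⟨x, S.iseqv.refl _, S.iseqv.refl _⟩
end

section
/- The category Eq has coequalizers: given morphisms α, β : X → Y induced by computable functions f₁, f₂, let Z be the equivalence relation generated by Y ∪ {(f₁(x), f₂(x)) : x ∈ ℕ}. Then the morphism γ : Y → Z induced by the identity function on ℕ is a coequalizer of α and β. -/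
/-- The equivalence relation generated by a binary relation on ℕ. -/
def genSetoid (r : ℕ → ℕ → Prop) : Setoid ℕ :=
  ⟨Relation.EqvGen r, Relation.EqvGen.is_equivalence r⟩

/-- The relation generating the coequalizer: `Y` together with the pairs `(f₁ x, f₂ x)`. -/
def coeqRel (Y : Setoid ℕ) (f₁ f₂ : ℕ → ℕ) : ℕ → ℕ → Prop :=
  fun u v => Y.r u v ∨ ∃ x, u = f₁ x ∧ v = f₂ x

/-- `Eq` has coequalizers: for morphisms `α, β : X → Y` induced by computable `f₁, f₂`,
the morphism `γ : Y → Z` induced by the identity, where `Z` is generated by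
`Y ∪ {(f₁ x, f₂ x)}`, is a coequalizer of `α` and `β`. -/
theorem stmt_11 (X Y : Setoid ℕ) (f₁ f₂ : ℕ → ℕ)
    (hf₁ : Computable f₁) (hf₂ : Computable f₂)
    (hp₁ : EqvPres X Y f₁) (hp₂ : EqvPres X Y f₂)
    (α β : Quotient X → Quotient Y)
    (hα : ∀ x, α (Quotient.mk X x) = Quotient.mk Y (f₁ x))
    (hβ : ∀ x, β (Quotient.mk X x) = Quotient.mk Y (f₂ x))
    (γ : Quotient Y → Quotient (genSetoid (coeqRel Y f₁ f₂)))
    (hγ : ∀ y, γ (Quotient.mk Y y) = Quotient.mk (genSetoid (coeqRel Y f₁ f₂)) y) :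
    IsMor Y (genSetoid (coeqRel Y f₁ f₂)) γ ∧ γ ∘ α = γ ∘ β ∧
    ∀ (U : Setoid ℕ) (γ' : Quotient Y → Quotient U),
      IsMor Y U γ' → γ' ∘ α = γ' ∘ β →
      ∃! δ : Quotient (genSetoid (coeqRel Y f₁ f₂)) → Quotient U,
        IsMor (genSetoid (coeqRel Y f₁ f₂)) U δ ∧ δ ∘ γ = γ' := by
  set Z := genSetoid (coeqRel Y f₁ f₂) with hZ
  refine ⟨⟨id, Computable.id, ?_, hγ⟩, ?_, ?_⟩
  · intro x y h
    exact Relation.EqvGen.rel _ _ (Or.inl h)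
  · funext q
    induction q using Quotient.ind with
    | _ x =>
      simp only [Function.comp_apply, hα, hβ, hγ]
      exact Quotient.sound (Relation.EqvGen.rel _ _ (Or.inr ⟨x, rfl, rfl⟩))
  · intro U γ' hmor hcomm
    obtain ⟨g, hgc, hgp, hg⟩ := hmor
    have hgZ : EqvPres Z U g := by
      intro x y h
      induction h with
      | rel u v huv =>
        rcases huv with h | ⟨x, rfl, rfl⟩
        · exact hgp _ _ h
        · have := congrFun hcomm (Quotient.mk X x)
          simp only [Function.comp_apply, hα, hβ, hg] at this
          exact Quotient.exact this
      | refl u => exact U.refl _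
      | symm u v _ ih => exact U.symm ih
      | trans u v w _ _ ih1 ih2 => exact U.trans ih1 ih2
    refine ⟨fun q => Quotient.lift (fun n => Quotient.mk U (g n))
      (fun a b h => Quotient.sound (hgZ a b h)) q, ⟨⟨g, hgc, hgZ, fun x => rfl⟩, ?_⟩, ?_⟩
    · funext q
      induction q using Quotient.ind with
      | _ y => simp only [Function.comp_apply, hγ, Quotient.lift_mk, hg]; rfl
    · rintro δ ⟨-, hδγ⟩
      funext q
      induction q using Quotient.ind with
      | _ y =>
        have h := congrFun hδγ (Quotient.mk Y y)
        rw [Function.comp_apply, hγ] at h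
        rw [h, hg]
        rfl
end

section
/- If Y is a Σ⁰ₙ equivalence relation (n ≥ 1) and f₁, f₂ are computable functions, then the equivalence relation generated by Y together with the pairs {(f₁(x), f₂(x)) : x ∈ ℕ} is again Σ⁰ₙ. Consequently, the full subcategory Eq(Σ⁰ₙ) is closed under coequalizers. -/
/-- The Σ⁰ₙ levels of the arithmetical hierarchy for subsets of ℕ:
Σ⁰₀ = computable, and Σ⁰ₙ₊₁ = ∃-projections of Π⁰ₙ predicates. -/
def SigmaN : ℕ → (ℕ → Prop) → Prop
  | 0, p => ComputablePred p
  | n + 1, p => ∃ q : ℕ → Prop, SigmaN n (fun x => ¬ q x) ∧ ∀ x, p x ↔ ∃ y, q (Nat.pair x y)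

/-- An equivalence relation is Σ⁰ₙ if its graph (coded via Cantor pairing) is Σ⁰ₙ. -/
def SigmaNRel (n : ℕ) (R : Setoid ℕ) : Prop :=
  SigmaN n fun c => R.r c.unpair.1 c.unpair.2

set_option maxHeartbeats 1000000

namespace Stmt12Aux

theorem comp_pred {p : ℕ → Prop} {g : ℕ → ℕ} (hp : ComputablePred p) (hg : Computable g) :
    ComputablePred fun x => p (g x) := by
  obtain ⟨f, hf, rfl⟩ := ComputablePred.computable_iff.1 hp
  exact ComputablePred.computable_iff.2 ⟨fun x => f (g x), hf.comp hg, rfl⟩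

theorem and_pred {p q : ℕ → Prop} (hp : ComputablePred p) (hq : ComputablePred q) :
    ComputablePred fun x => p x ∧ q x := by
  obtain ⟨f, hf, rfl⟩ := ComputablePred.computable_iff.1 hp
  obtain ⟨g, hg, rfl⟩ := ComputablePred.computable_iff.1 hq
  exact ComputablePred.computable_iff.2 ⟨fun x => f x && g x,
    (Primrec.dom_bool₂ (· && ·)).to_comp.comp hf hg, by funext x; simp⟩

theorem or_pred {p q : ℕ → Prop} (hp : ComputablePred p) (hq : ComputablePred q) :
    ComputablePred fun x => p x ∨ q x := by
  obtain ⟨f, hf, rfl⟩ := ComputablePred.computable_iff.1 hp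
  obtain ⟨g, hg, rfl⟩ := ComputablePred.computable_iff.1 hq
  exact ComputablePred.computable_iff.2 ⟨fun x => f x || g x,
    (Primrec.dom_bool₂ (· || ·)).to_comp.comp hf hg, by funext x; simp⟩

theorem eq_pred {g h : ℕ → ℕ} (hg : Computable g) (hh : Computable h) :
    ComputablePred fun x => g x = h x :=
  ComputablePred.computable_iff.2 ⟨fun x => decide (g x = h x),
    Primrec.eq.decide.to_comp.comp hg hh, by funext x; simp⟩

theorem lt_pred {g h : ℕ → ℕ} (hg : Computable g) (hh : Computable h) :
    ComputablePred fun x => g x < h x :=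
  ComputablePred.computable_iff.2 ⟨fun x => decide (g x < h x),
    Primrec.nat_lt.decide.to_comp.comp hg hh, by funext x; simp⟩

theorem ball_pred {p : ℕ → Prop} {k : ℕ → ℕ} (hp : ComputablePred p) (hk : Computable k) :
    ComputablePred fun c => ∀ i < k c, p (Nat.pair i c) := by
  obtain ⟨f, hf, rfl⟩ := ComputablePred.computable_iff.1 hp
  have hstep : Computable₂ (fun (c : ℕ) (q : ℕ × Bool) => q.2 && f (Nat.pair q.1 c)) :=
    (Primrec.dom_bool₂ (· && ·)).to_comp.comp (Computable.snd.comp Computable.snd)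
      (hf.comp (Primrec₂.natPair.to_comp.comp (Computable.fst.comp Computable.snd) Computable.fst))
  have hF : Computable fun c => Nat.rec (motive := fun _ => Bool) true
      (fun i acc => acc && f (Nat.pair i c)) (k c) :=
    Computable.nat_rec hk (Computable.const true) hstep
  refine ComputablePred.computable_iff.2 ⟨_, hF, funext fun c => propext ?_⟩
  show (∀ i < k c, (f (Nat.pair i c) : Prop)) ↔ _
  induction k c with
  | zero => simp
  | succ m ih =>
      constructor
      · intro h
        show (_ && _) = true
        rw [Bool.and_eq_true]
        exact ⟨ih.1 fun i hi => h i (hi.trans (Nat.lt_succ_self m)), h m (Nat.lt_succ_self m)⟩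
      · intro h i hi
        rw [Bool.and_eq_true] at h
        have h' := h
        rcases Nat.lt_succ_iff_lt_or_eq.1 hi with hi' | rfl
        · exact ih.2 h'.1 i hi'
        · exact h'.2

theorem bex_pred {p : ℕ → Prop} {k : ℕ → ℕ} (hp : ComputablePred p) (hk : Computable k) :
    ComputablePred fun c => ∃ i, i < k c ∧ p (Nat.pair i c) := by
  have := (ball_pred hp.not hk).not
  exact this.of_eq fun c => by push_neg; rfl

-- computable helpers
theorem cu1 : Computable fun c : ℕ => c.unpair.1 :=
  (Primrec.fst.comp Primrec.unpair).to_comp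

theorem cu2 : Computable fun c : ℕ => c.unpair.2 :=
  (Primrec.snd.comp Primrec.unpair).to_comp

theorem cpair {g h : ℕ → ℕ} (hg : Computable g) (hh : Computable h) :
    Computable fun c => Nat.pair (g c) (h c) :=
  Primrec₂.natPair.to_comp.comp hg hh

-- SigmaN basics
theorem sigma_congr : ∀ {n : ℕ} {p q : ℕ → Prop}, SigmaN n p → (∀ x, p x ↔ q x) → SigmaN n q
  | 0, _, _, hp, h => hp.of_eq h
  | _+1, _, _, ⟨r, hr, hiff⟩, h => ⟨r, hr, fun x => (h x).symm.trans (hiff x)⟩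

theorem sigma_comp : ∀ (n : ℕ) {p : ℕ → Prop} {g : ℕ → ℕ}, SigmaN n p → Computable g →
    SigmaN n fun x => p (g x)
  | 0, _, _, hp, hg => comp_pred hp hg
  | n+1, p, g, ⟨r, hr, hiff⟩, hg =>
    ⟨fun c => r (Nat.pair (g c.unpair.1) c.unpair.2),
      sigma_comp n hr (cpair (hg.comp cu1) cu2),
      fun x => by simpa using hiff (g x)⟩

theorem sigma_mono : ∀ (n : ℕ) {p : ℕ → Prop}, SigmaN n p → SigmaN (n+1) p
  | 0, p, hp =>
    ⟨fun c => p c.unpair.1, (comp_pred hp cu1).not, fun x => by simp⟩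
  | n+1, _, ⟨r, hr, hiff⟩ => ⟨r, sigma_mono n hr, hiff⟩

theorem sigma_of_le {m n : ℕ} (h : m ≤ n) {p : ℕ → Prop} (hp : SigmaN m p) : SigmaN n p := by
  induction n with
  | zero => exact Nat.le_zero.1 h ▸ hp
  | succ n ih =>
      rcases Nat.lt_succ_iff_lt_or_eq.1 (Nat.lt_succ_of_le h) with h' | rfl
      · exact sigma_mono n (ih (Nat.lt_succ_iff.1 h'))
      · exact hp

theorem sigma_of_computable {p : ℕ → Prop} (hp : ComputablePred p) (n : ℕ) : SigmaN n p :=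
  sigma_of_le (Nat.zero_le n) hp

theorem sigma_and_or : ∀ (n : ℕ),
    (∀ (p q : ℕ → Prop), SigmaN n p → SigmaN n q → SigmaN n fun x => p x ∧ q x) ∧
    (∀ (p q : ℕ → Prop), SigmaN n p → SigmaN n q → SigmaN n fun x => p x ∨ q x)
  | 0 => ⟨fun _ _ hp hq => and_pred hp hq, fun _ _ hp hq => or_pred hp hq⟩
  | n+1 => by
    obtain ⟨ihand, ihor⟩ := sigma_and_or n
    constructor
    · rintro p q ⟨r₁, hr₁, h₁⟩ ⟨r₂, hr₂, h₂⟩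
      refine ⟨fun c => r₁ (Nat.pair c.unpair.1 c.unpair.2.unpair.1) ∧
          r₂ (Nat.pair c.unpair.1 c.unpair.2.unpair.2), ?_, ?_⟩
      · have g₁ := cpair cu1 (cu1.comp cu2)
        have g₂ := cpair cu1 (cu2.comp cu2)
        exact sigma_congr (ihor _ _ (sigma_comp n hr₁ g₁) (sigma_comp n hr₂ g₂))
          (fun c => (not_and_or).symm)
      · intro x
        constructor
        · rintro ⟨hx₁, hx₂⟩
          obtain ⟨y₁, hy₁⟩ := (h₁ x).1 hx₁
          obtain ⟨y₂, hy₂⟩ := (h₂ x).1 hx₂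
          exact ⟨Nat.pair y₁ y₂, by simpa using ⟨hy₁, hy₂⟩⟩
        · rintro ⟨y, hy⟩
          simp only [Nat.unpair_pair] at hy
          exact ⟨(h₁ x).2 ⟨_, hy.1⟩, (h₂ x).2 ⟨_, hy.2⟩⟩
    · rintro p q ⟨r₁, hr₁, h₁⟩ ⟨r₂, hr₂, h₂⟩
      refine ⟨fun c => r₁ c ∨ r₂ c, ?_, ?_⟩
      · exact sigma_congr (ihand _ _ hr₁ hr₂) (fun c => (not_or).symm)
      · intro x
        constructor
        · rintro (hx | hx)
          · obtain ⟨y, hy⟩ := (h₁ x).1 hx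
            exact ⟨y, Or.inl hy⟩
          · obtain ⟨y, hy⟩ := (h₂ x).1 hx
            exact ⟨y, Or.inr hy⟩
        · rintro ⟨y, hy | hy⟩
          · exact Or.inl ((h₁ x).2 ⟨y, hy⟩)
          · exact Or.inr ((h₂ x).2 ⟨y, hy⟩)

theorem sigma_and {n : ℕ} {p q : ℕ → Prop} (hp : SigmaN n p) (hq : SigmaN n q) :
    SigmaN n fun x => p x ∧ q x := (sigma_and_or n).1 p q hp hq

theorem sigma_or {n : ℕ} {p q : ℕ → Prop} (hp : SigmaN n p) (hq : SigmaN n q) :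
    SigmaN n fun x => p x ∨ q x := (sigma_and_or n).2 p q hp hq

theorem sigma_exists {n : ℕ} {p : ℕ → Prop} (hp : SigmaN (n+1) p) :
    SigmaN (n+1) fun c => ∃ s, p (Nat.pair c s) := by
  obtain ⟨r, hr, h⟩ := hp
  refine ⟨fun c => r (Nat.pair (Nat.pair c.unpair.1 c.unpair.2.unpair.1) c.unpair.2.unpair.2),
    sigma_comp n hr (cpair (cpair cu1 (cu1.comp cu2)) (cu2.comp cu2)), fun x => ?_⟩
  constructor
  · rintro ⟨s, hs⟩
    obtain ⟨y, hy⟩ := (h (Nat.pair x s)).1 hs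
    exact ⟨Nat.pair s y, by simpa using hy⟩
  · rintro ⟨w, hw⟩
    simp only [Nat.unpair_pair] at hw
    exact ⟨w.unpair.1, (h _).2 ⟨w.unpair.2, hw⟩⟩

theorem sigma_bex : ∀ (n : ℕ) (p : ℕ → Prop) (k : ℕ → ℕ), SigmaN n p → Computable k →
    SigmaN n fun c => ∃ i, i < k c ∧ p (Nat.pair i c)
  | 0, p, k, hp, hk => bex_pred hp hk
  | n+1, p, k, ⟨r, hr, h⟩, hk => by
    refine ⟨fun d => d.unpair.2.unpair.1 < k d.unpair.1 ∧
        r (Nat.pair (Nat.pair d.unpair.2.unpair.1 d.unpair.1) d.unpair.2.unpair.2), ?_, ?_⟩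
    · have h1 : SigmaN n fun d : ℕ => ¬ (d.unpair.2.unpair.1 < k d.unpair.1) :=
        sigma_of_computable (lt_pred (cu1.comp cu2) (hk.comp cu1)).not n
      have h2 := sigma_comp n hr (cpair (cpair (cu1.comp cu2) cu1) (cu2.comp cu2))
      exact sigma_congr (sigma_or h1 h2) (fun d => (not_and_or).symm)
    · intro c
      constructor
      · rintro ⟨i, hik, hpi⟩
        obtain ⟨y, hy⟩ := (h _).1 hpi
        refine ⟨Nat.pair i y, ?_⟩
        simp only [Nat.unpair_pair]
        exact ⟨hik, hy⟩
      · rintro ⟨w, hw⟩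
        simp only [Nat.unpair_pair] at hw
        exact ⟨w.unpair.1, hw.1, (h _).2 ⟨w.unpair.2, hw.2⟩⟩

theorem sigma_ball : ∀ (n : ℕ) (p : ℕ → Prop) (k : ℕ → ℕ), SigmaN n p → Computable k →
    SigmaN n fun c => ∀ i < k c, p (Nat.pair i c)
  | 0, p, k, hp, hk => ball_pred hp hk
  | n+1, p, k, ⟨r, hr, h⟩, hk => by
    classical
    set dec : ℕ → ℕ → ℕ := fun s i => (Denumerable.ofNat (List ℕ) s).getD i 0 with hdecdef
    have hdec : Computable₂ dec :=
      ((Primrec.list_getD 0).comp ((Primrec.ofNat (List ℕ)).comp Primrec.fst)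
        Primrec.snd).to_comp
    refine ⟨fun d => ∀ i < k d.unpair.1,
        r (Nat.pair (Nat.pair i d.unpair.1) (dec d.unpair.2 i)), ?_, ?_⟩
    · have hg : Computable fun e : ℕ =>
          Nat.pair (Nat.pair e.unpair.1 e.unpair.2.unpair.1)
            (dec e.unpair.2.unpair.2 e.unpair.1) :=
        cpair (cpair cu1 (cu1.comp cu2)) (hdec.comp (cu2.comp cu2) cu1)
      have hb := sigma_bex n _ (fun d => k d.unpair.1) (sigma_comp n hr hg) (hk.comp cu1)
      refine sigma_congr hb fun d => ?_
      simp only [Nat.unpair_pair]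
      constructor
      · rintro ⟨i, hi, hni⟩ hall
        exact hni (hall i hi)
      · intro hd
        by_contra hne
        apply hd
        intro i hi
        by_contra hni
        exact hne ⟨i, hi, hni⟩
    · intro c
      constructor
      · intro hall
        have hch : ∀ i, ∃ y, i < k c → r (Nat.pair (Nat.pair i c) y) := by
          intro i
          by_cases hi : i < k c
          · obtain ⟨y, hy⟩ := (h _).1 (hall i hi)
            exact ⟨y, fun _ => hy⟩
          · exact ⟨0, fun h' => absurd h' hi⟩
        choose w hw using hch
        refine ⟨Encodable.encode ((List.range (k c)).map w), ?_⟩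
        simp only [Nat.unpair_pair]
        intro i hi
        have hd : dec (Encodable.encode ((List.range (k c)).map w)) i = w i := by
          rw [hdecdef]
          simp only [Denumerable.ofNat_encode]
          have hlen : i < ((List.range (k c)).map w).length := by simpa using hi
          rw [List.getD_eq_getElem _ _ hlen]
          simp
        rw [hd]
        exact hw i hi
      · rintro ⟨s, hs⟩ i hi
        simp only [Nat.unpair_pair] at hs
        exact (h _).2 ⟨dec s i, hs i hi⟩



def stepRel (Y : Setoid ℕ) (f₁ f₂ : ℕ → ℕ) (u v : ℕ) : Prop :=
  Y.r u v ∨ (∃ x, u = f₁ x ∧ v = f₂ x) ∨ (∃ x, v = f₁ x ∧ u = f₂ x)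

variable {Y : Setoid ℕ} {f₁ f₂ : ℕ → ℕ}

theorem stepRel_symm {u v} (h : stepRel Y f₁ f₂ u v) : stepRel Y f₁ f₂ v u := by
  rcases h with h | h | h
  · exact Or.inl (Y.iseqv.symm h)
  · exact Or.inr (Or.inr h)
  · exact Or.inr (Or.inl h)

theorem rtg_symm {u v} (h : Relation.ReflTransGen (stepRel Y f₁ f₂) u v) :
    Relation.ReflTransGen (stepRel Y f₁ f₂) v u := by
  induction h with
  | refl => exact .refl
  | tail _ h ih => exact (Relation.ReflTransGen.single (stepRel_symm h)).trans ih

theorem eqvGen_iff_rtg {u v} :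
    Relation.EqvGen (coeqRel Y f₁ f₂) u v ↔ Relation.ReflTransGen (stepRel Y f₁ f₂) u v := by
  constructor
  · intro h
    induction h with
    | rel x y hxy =>
        rcases hxy with h | h
        · exact .single (Or.inl h)
        · exact .single (Or.inr (Or.inl h))
    | refl x => exact .refl
    | symm x y _ ih => exact rtg_symm ih
    | trans x y z _ _ ih₁ ih₂ => exact ih₁.trans ih₂
  · intro h
    induction h with
    | refl => exact Relation.EqvGen.refl _
    | tail _ hstep ih =>
        refine Relation.EqvGen.trans _ _ _ ih ?_
        rcases hstep with h | ⟨x, hx1, hx2⟩ | ⟨x, hx1, hx2⟩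
        · exact Relation.EqvGen.rel _ _ (Or.inl h)
        · exact Relation.EqvGen.rel _ _ (Or.inr ⟨x, hx1, hx2⟩)
        · exact Relation.EqvGen.symm _ _ (Relation.EqvGen.rel _ _ (Or.inr ⟨x, hx1, hx2⟩))

theorem chain_iff_getD (R : ℕ → ℕ → Prop) :
    ∀ (l : List ℕ) (u : ℕ), List.Chain R u l ↔
      ∀ i < l.length, R ((u :: l).getD i 0) ((u :: l).getD (i+1) 0)
  | [], u => by simp [List.Chain]
  | b :: t, u => by
    rw [show List.Chain R u (b :: t) ↔ List.IsChain R (u :: b :: t) from Iff.rfl, List.chain_cons,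
      show List.IsChain R (b :: t) ↔ _ from chain_iff_getD R t b]
    constructor
    · rintro ⟨h1, h2⟩ i hi
      cases i with
      | zero => simpa using h1
      | succ j =>
          have := h2 j (Nat.lt_of_succ_lt_succ hi)
          simpa using this
    · intro h
      refine ⟨by simpa using h 0 (Nat.succ_pos _), fun j hj => ?_⟩
      have := h (j+1) (Nat.succ_lt_succ hj)
      simpa using this

theorem getD_length_eq_getLast :
    ∀ (l : List ℕ) (u : ℕ), (u :: l).getD l.length 0 = (u :: l).getLast (List.cons_ne_nil u l)
  | [], _ => rfl
  | b :: t, u => by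
    rw [List.getLast_cons_cons]
    simpa using getD_length_eq_getLast t b

theorem rtg_iff_code {u v : ℕ} :
    Relation.ReflTransGen (stepRel Y f₁ f₂) u v ↔
    ∃ s : ℕ, (∀ i < (Denumerable.ofNat (List ℕ) s).length,
        stepRel Y f₁ f₂ ((u :: Denumerable.ofNat (List ℕ) s).getD i 0)
          ((u :: Denumerable.ofNat (List ℕ) s).getD (i+1) 0)) ∧
      (u :: Denumerable.ofNat (List ℕ) s).getD (Denumerable.ofNat (List ℕ) s).length 0 = v := by
  constructor
  · intro h
    obtain ⟨l, hc, hl⟩ := List.exists_isChain_cons_of_relationReflTransGen h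
    refine ⟨Encodable.encode l, ?_, ?_⟩
    · rw [Denumerable.ofNat_encode]
      exact (chain_iff_getD _ l u).1 hc
    · rw [Denumerable.ofNat_encode, getD_length_eq_getLast]
      exact hl
  · rintro ⟨s, h1, h2⟩
    exact List.relationReflTransGen_of_exists_isChain_cons _ ((chain_iff_getD _ _ u).2 h1)
      (by rw [getD_length_eq_getLast] at h2; exact h2)


def elc (t : ℕ) : ℕ :=
  (t.unpair.1 :: Denumerable.ofNat (List ℕ) t.unpair.2.unpair.1).getD t.unpair.2.unpair.2 0

def lenc (s : ℕ) : ℕ := (Denumerable.ofNat (List ℕ) s).length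

theorem pu1 : Primrec fun c : ℕ => c.unpair.1 := Primrec.fst.comp Primrec.unpair
theorem pu2 : Primrec fun c : ℕ => c.unpair.2 := Primrec.snd.comp Primrec.unpair

theorem helc : Computable elc :=
  ((Primrec.list_getD 0).comp
    (Primrec.list_cons.comp pu1 ((Primrec.ofNat (List ℕ)).comp (pu1.comp pu2)))
    (pu2.comp pu2)).to_comp

theorem hlenc : Computable lenc :=
  (Primrec.list_length.comp (Primrec.ofNat (List ℕ))).to_comp

theorem csucc : Computable fun n : ℕ => n + 1 := Primrec.succ.to_comp

theorem sigma_step {Y : Setoid ℕ} {f₁ f₂ : ℕ → ℕ} {n : ℕ} (hn : 1 ≤ n) (hY : SigmaNRel n Y)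
    (hf₁ : Computable f₁) (hf₂ : Computable f₂) :
    SigmaN n fun c => stepRel Y f₁ f₂ c.unpair.1 c.unpair.2 := by
  have hA : SigmaN 1 fun c : ℕ => ∃ x, c.unpair.1 = f₁ x ∧ c.unpair.2 = f₂ x := by
    refine ⟨fun d => d.unpair.1.unpair.1 = f₁ d.unpair.2 ∧ d.unpair.1.unpair.2 = f₂ d.unpair.2,
      (and_pred (eq_pred (cu1.comp cu1) (hf₁.comp cu2))
        (eq_pred (cu2.comp cu1) (hf₂.comp cu2))).not, fun c => ?_⟩
    simp [Nat.unpair_pair]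
  have hB : SigmaN 1 fun c : ℕ => ∃ x, c.unpair.2 = f₁ x ∧ c.unpair.1 = f₂ x := by
    refine ⟨fun d => d.unpair.1.unpair.2 = f₁ d.unpair.2 ∧ d.unpair.1.unpair.1 = f₂ d.unpair.2,
      (and_pred (eq_pred (cu2.comp cu1) (hf₁.comp cu2))
        (eq_pred (cu1.comp cu1) (hf₂.comp cu2))).not, fun c => ?_⟩
    simp [Nat.unpair_pair]
  exact sigma_or hY (sigma_or (sigma_of_le hn hA) (sigma_of_le hn hB))

end Stmt12Aux


open Stmt12Aux

/-- For `n ≥ 1`, the equivalence relation generated by a Σ⁰ₙ equivalence relation `Y`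
and the pairs `(f₁ x, f₂ x)` for computable `f₁, f₂` is again Σ⁰ₙ; hence `Eq(Σ⁰ₙ)`
is closed under coequalizers. -/
theorem stmt_12 (n : ℕ) (hn : 1 ≤ n) (Y : Setoid ℕ) (hY : SigmaNRel n Y)
    (f₁ f₂ : ℕ → ℕ) (hf₁ : Computable f₁) (hf₂ : Computable f₂) :
    SigmaNRel n (genSetoid (coeqRel Y f₁ f₂)) := by
  obtain ⟨m, rfl⟩ : ∃ m, n = m + 1 := by
    cases n with
    | zero => omega
    | succ m => exact ⟨m, rfl⟩
  have hstep := sigma_step (n := m+1) (by omega) hY hf₁ hf₂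
  have hg : Computable fun e : ℕ =>
      Nat.pair
        (elc (Nat.pair e.unpair.2.unpair.1.unpair.1 (Nat.pair e.unpair.2.unpair.2 e.unpair.1)))
        (elc (Nat.pair e.unpair.2.unpair.1.unpair.1
          (Nat.pair e.unpair.2.unpair.2 (e.unpair.1+1)))) :=
    cpair (helc.comp (cpair (cu1.comp (cu1.comp cu2)) (cpair (cu2.comp cu2) cu1)))
      (helc.comp (cpair (cu1.comp (cu1.comp cu2)) (cpair (cu2.comp cu2) (csucc.comp cu1))))
  have hball := sigma_ball (m+1) _ (fun d => lenc d.unpair.2)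
      (sigma_comp (m+1) hstep hg) (hlenc.comp cu2)
  have heq : ComputablePred fun d : ℕ =>
      elc (Nat.pair d.unpair.1.unpair.1 (Nat.pair d.unpair.2 (lenc d.unpair.2))) =
        d.unpair.1.unpair.2 :=
    eq_pred (helc.comp (cpair (cu1.comp cu1) (cpair cu2 (hlenc.comp cu2)))) (cu2.comp cu1)
  have hQ := sigma_and hball (sigma_of_computable heq (m+1))
  have hEx := sigma_exists hQ
  refine sigma_congr hEx fun c => ?_
  rw [show (genSetoid (coeqRel Y f₁ f₂)).r = Relation.EqvGen (coeqRel Y f₁ f₂) from rfl,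
    eqvGen_iff_rtg, rtg_iff_code]
  simp only [Nat.unpair_pair, elc, lenc]
end

section
/- Every ceer Z is a coequalizer, in the category Eq, of a pair of morphisms from Id to Id: if h is a computable function enumerating Z (i.e., u Z v iff ⟨u,v⟩ ∈ range h), then Z is the coequalizer of the morphisms induced by f₁(x) = (h(x))₀ and f₂(x) = (h(x))₁. -/
/-- The identity (equality) equivalence relation on ℕ. -/
def idSetoid : Setoid ℕ := ⟨Eq, eq_equivalence⟩

/-- Every ceer `Z` is a coequalizer in `Eq` of a pair of morphisms `Id → Id`:
if `h` computably enumerates `Z` (`u Z v` iff `⟨u,v⟩ ∈ range h`), then `Z` is the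
equivalence relation generated by the pairs `((h n).unpair.1, (h n).unpair.2)`, and the
map induced by the identity is a coequalizer of the morphisms induced by the projections. -/
theorem stmt_13 (Z : Setoid ℕ) (h : ℕ → ℕ) (hh : Computable h)
    (henum : ∀ u v, Z.r u v ↔ ∃ n, h n = Nat.pair u v)
    (f₁ f₂ : ℕ → ℕ) (hf₁ : ∀ n, f₁ n = (h n).unpair.1) (hf₂ : ∀ n, f₂ n = (h n).unpair.2)
    (α β : Quotient idSetoid → Quotient idSetoid)
    (hα : ∀ x, α (Quotient.mk idSetoid x) = Quotient.mk idSetoid (f₁ x))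
    (hβ : ∀ x, β (Quotient.mk idSetoid x) = Quotient.mk idSetoid (f₂ x))
    (γ : Quotient idSetoid → Quotient Z)
    (hγ : ∀ x, γ (Quotient.mk idSetoid x) = Quotient.mk Z x) :
    (∀ u v, Z.r u v ↔ Relation.EqvGen (coeqRel idSetoid f₁ f₂) u v) ∧
    IsMor idSetoid Z γ ∧ γ ∘ α = γ ∘ β ∧
    ∀ (U : Setoid ℕ) (γ' : Quotient idSetoid → Quotient U),
      IsMor idSetoid U γ' → γ' ∘ α = γ' ∘ β →
      ∃! δ : Quotient Z → Quotient U, IsMor Z U δ ∧ δ ∘ γ = γ' := by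

  have idr : ∀ x y : ℕ, idSetoid.r x y ↔ x = y := fun _ _ => Iff.rfl
  have key : ∀ u v, Z.r u v ↔ Relation.EqvGen (coeqRel idSetoid f₁ f₂) u v := by
    intro u v
    constructor
    · intro huv
      obtain ⟨n, hn⟩ := (henum u v).1 huv
      exact Relation.EqvGen.rel _ _ (Or.inr ⟨n, by simp [hf₁, hf₂, hn]⟩)
    · intro hg
      induction hg with
      | rel x y hxy =>
        rcases hxy with hxy | ⟨n, h1, h2⟩
        · exact (idr x y).1 hxy ▸ Z.refl x
        · exact (henum x y).2 ⟨n, by rw [h1, h2, hf₁, hf₂]; exact (Nat.pair_unpair _).symm⟩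
      | refl x => exact Z.refl x
      | symm x y _ ih => exact Z.symm ih
      | trans x y z _ _ ih1 ih2 => exact Z.trans ih1 ih2
  have hpair : ∀ x, Z.r (f₁ x) (f₂ x) := by
    intro x
    exact (henum _ _).2 ⟨x, by rw [hf₁, hf₂]; exact (Nat.pair_unpair _).symm⟩
  refine ⟨key, ⟨id, Computable.id, fun x y hxy => (idr x y).1 hxy ▸ Z.refl x,
    fun x => hγ x⟩, ?_, ?_⟩
  · funext q
    induction q using Quotient.ind with
    | _ x =>
      show γ (α (Quotient.mk idSetoid x)) = γ (β (Quotient.mk idSetoid x))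
      rw [hα, hβ, hγ, hγ]
      exact Quotient.sound (hpair x)
  · intro U γ' hmor hcoeq
    obtain ⟨g, hgc, hgp, hgm⟩ := hmor
    have hgeq : ∀ x, U.r (g (f₁ x)) (g (f₂ x)) := by
      intro x
      have := congrFun hcoeq (Quotient.mk idSetoid x)
      simp only [Function.comp_apply, hα, hβ, hgm] at this
      exact Quotient.exact this
    have hlift : ∀ x y, Z.r x y → U.r (g x) (g y) := by
      intro x y hxy
      have := (key x y).1 hxy
      induction this with
      | rel a b hab =>
        rcases hab with hab | ⟨n, h1, h2⟩
        · exact (idr a b).1 hab ▸ U.refl (g a)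
        · rw [h1, h2]; exact hgeq n
      | refl a => exact U.refl _
      | symm a b _ ih => exact U.symm (ih ((key a b).2 (by assumption)))
      | trans a b c hab hbc ih1 ih2 =>
          exact U.trans (ih1 ((key a b).2 hab)) (ih2 ((key b c).2 hbc))
    refine ⟨Quotient.lift (fun x => Quotient.mk U (g x)) (fun a b hab => Quotient.sound (hlift a b hab)), ⟨⟨g, hgc, hlift, fun x => rfl⟩, ?_⟩, ?_⟩
    · funext q
      induction q using Quotient.ind with
      | _ x =>
        show Quotient.lift _ _ (γ (Quotient.mk idSetoid x)) = γ' (Quotient.mk idSetoid x)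
        rw [hγ, hgm]; rfl
    · rintro δ' ⟨_, hδ'⟩
      funext q
      induction q using Quotient.ind with
      | _ x =>
        have h1 := congrFun hδ' (Quotient.mk idSetoid x)
        simp only [Function.comp_apply, hγ] at h1
        rw [h1, hgm]; rfl
end

section
/- The class of dark ceers together with finite ceers is closed under uniform join: if R and S are each either dark (infinitely many classes and Id is not computably reducible to them) or finite (finitely many classes), then R ⊕ S is dark or finite. -/
/-- The uniform join `R ⊕ S`: `2x ∼ 2y` iff `x R y`, `2x+1 ∼ 2y+1` iff `x S y`,
and evens are inequivalent to odds. -/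
def joinSetoid (R S : Setoid ℕ) : Setoid ℕ where
  r n m := n % 2 = m % 2 ∧ (n % 2 = 0 → R.r (n / 2) (m / 2)) ∧ (n % 2 = 1 → S.r (n / 2) (m / 2))
  iseqv := by
    refine ⟨fun n => ⟨rfl, fun _ => R.iseqv.refl _, fun _ => S.iseqv.refl _⟩, ?_, ?_⟩
    · rintro n m ⟨h1, h2, h3⟩
      exact ⟨h1.symm, fun h => R.iseqv.symm (h2 (h1.trans h)),
        fun h => S.iseqv.symm (h3 (h1.trans h))⟩
    · rintro n m k ⟨h1, h2, h3⟩ ⟨g1, g2, g3⟩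
      exact ⟨h1.trans g1, fun h => R.iseqv.trans (h2 h) (g2 (h1.symm.trans h)),
        fun h => S.iseqv.trans (h3 h) (g3 (h1.symm.trans h))⟩

/-- Computable reducibility of equivalence relations. -/
def Reducible (R S : Setoid ℕ) : Prop :=
  ∃ f : ℕ → ℕ, Computable f ∧ ∀ x y, R.r x y ↔ S.r (f x) (f y)

/-- A ceer is dark if it has infinitely many classes and `Id` is not reducible to it. -/
def Dark (R : Setoid ℕ) : Prop := ¬ Finite (Quotient R) ∧ ¬ Reducible idSetoid R

lemma exists_enum {p : ℕ → Bool} (hp : Computable p) (hinf : {x | p x = true}.Infinite) :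
    ∃ g : ℕ → ℕ, Computable g ∧ StrictMono g ∧ ∀ n, p (g n) = true := by
  have hex : ∀ a : ℕ, ∃ n, p (a + 1 + n) = true := by
    intro a
    obtain ⟨b, hb, hab⟩ := hinf.exists_gt a
    exact ⟨b - (a + 1), by rwa [Nat.add_sub_cancel' hab]⟩
  set nxt : ℕ → ℕ := fun a => a + 1 + Nat.find (hex a) with hnxt_def
  have hnxt_p : ∀ a, p (nxt a) = true := fun a => Nat.find_spec (hex a)
  have hnxt_gt : ∀ a, a < nxt a := fun a => by
    simp only [hnxt_def]; omega
  have hnxtc : Computable nxt := by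
    have h1 : Computable₂ fun (a n : ℕ) => p (a + 1 + n) :=
      hp.comp ((Primrec.nat_add.comp (Primrec.succ.comp .fst) .snd).to_comp)
    have h2 : Partrec fun a => Nat.rfind fun n => (fun a' => Part.some (p (a' + 1 + n))) a :=
      Partrec.rfind ((h1.partrec₂).of_eq (fun a => rfl))
    have h3 : Computable fun a => Nat.find (hex a) := by
      apply Partrec.of_eq_tot h2
      intro a
      apply Nat.mem_rfind.2
      constructor
      · simpa using Nat.find_spec (hex a)
      · intro m hm
        simpa using Nat.find_min (hex a) hm
    exact (Primrec.nat_add.to_comp.comp (Computable.succ) h3)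
  refine ⟨fun n => Nat.rec (nxt 0) (fun _ ih => nxt ih) n, ?_, ?_, ?_⟩
  · exact Computable.nat_rec Computable.id (Computable.const (nxt 0))
      ((hnxtc.comp (Computable.snd.comp Computable.snd)).to₂)
  · exact strictMono_nat_of_lt_succ fun n => hnxt_gt _
  · intro n; induction n with
    | zero => exact hnxt_p 0
    | succ k _ => exact hnxt_p _

/-- If `Id` reduces to a setoid `T` and infinitely many inputs land (mod 2) on side `b`,
and on side `b` the relation `T` coincides with `E` on halves, then `Id ≤ E` and `E` infinite. -/
lemma reduce_side {T : Setoid ℕ} {f : ℕ → ℕ} (hfc : Computable f)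
    (hf : ∀ x y, x = y ↔ T.r (f x) (f y)) (b : ℕ)
    (hinf : {x | f x % 2 = b}.Infinite) (E : Setoid ℕ)
    (hE : ∀ n m, n % 2 = b → m % 2 = b → (T.r n m ↔ E.r (n / 2) (m / 2))) :
    Reducible idSetoid E ∧ ¬ Finite (Quotient E) := by
  have hpc : Computable fun x => decide (f x % 2 = b) :=
    (Primrec.eq.comp (Primrec.nat_mod.comp .id (Primrec.const 2)) (Primrec.const b)).decide.to_comp.comp hfc
  have hinf' : {x | (fun x => decide (f x % 2 = b)) x = true}.Infinite := by
    convert hinf using 2 with x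
    simp
  obtain ⟨g, hgc, hgm, hgp⟩ := exists_enum hpc hinf'
  have hgb : ∀ n, f (g n) % 2 = b := fun n => by simpa using hgp n
  set h : ℕ → ℕ := fun n => f (g n) / 2 with hh
  have key : ∀ x y, x = y ↔ E.r (h x) (h y) := by
    intro x y
    constructor
    · rintro rfl; exact E.iseqv.refl _
    · intro hr
      have : T.r (f (g x)) (f (g y)) := (hE _ _ (hgb x) (hgb y)).2 hr
      exact hgm.injective ((hf (g x) (g y)).2 this)
  constructor
  · exact ⟨h, Primrec.nat_div.to_comp.comp (hfc.comp hgc) (Computable.const 2), key⟩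
  · intro hfin
    have inj : Function.Injective fun n => Quotient.mk E (h n) := by
      intro x y hxy
      exact (key x y).2 (Quotient.exact hxy)
    haveI := Finite.of_injective _ inj
    exact not_finite ℕ

lemma join_finite {R S : Setoid ℕ} (hR : Finite (Quotient R)) (hS : Finite (Quotient S)) :
    Finite (Quotient (joinSetoid R S)) := by
  have wd : ∀ n m : ℕ, (joinSetoid R S).r n m →
      (if n % 2 = 0 then Sum.inl (Quotient.mk R (n / 2)) else Sum.inr (Quotient.mk S (n / 2)))
      = (if m % 2 = 0 then Sum.inl (Quotient.mk R (m / 2)) else Sum.inr (Quotient.mk S (m / 2))) := by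
    rintro n m ⟨hp, he, ho⟩
    by_cases hn : n % 2 = 0
    · rw [if_pos hn, if_pos (hp ▸ hn), Quotient.sound (he hn)]
    · have hn1 : n % 2 = 1 := by omega
      rw [if_neg hn, if_neg (by omega : ¬ m % 2 = 0), Quotient.sound (ho hn1)]
  set φ : Quotient (joinSetoid R S) → Quotient R ⊕ Quotient S :=
    Quotient.lift _ wd with hφ
  have : Function.Injective φ := by
    intro a b
    induction a using Quotient.ind
    induction b using Quotient.ind
    rename_i n m
    intro hab
    simp only [hφ, Quotient.lift_mk] at hab
    apply Quotient.sound
    by_cases hn : n % 2 = 0 <;> by_cases hm : m % 2 = 0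
    · rw [if_pos hn, if_pos hm] at hab
      exact ⟨hn.trans hm.symm, fun _ => Quotient.exact (Sum.inl.inj hab), fun h => by omega⟩
    · rw [if_pos hn, if_neg hm] at hab; exact absurd hab (by simp)
    · rw [if_neg hn, if_pos hm] at hab; exact absurd hab (by simp)
    · rw [if_neg hn, if_neg hm] at hab
      exact ⟨by omega, fun h => by omega, fun _ => Quotient.exact (Sum.inr.inj hab)⟩
  exact Finite.of_injective φ this

lemma join_infinite_left {R S : Setoid ℕ} (hR : ¬ Finite (Quotient R)) :
    ¬ Finite (Quotient (joinSetoid R S)) := by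
  intro hfin
  apply hR
  have wd : ∀ x y : ℕ, R.r x y → (joinSetoid R S).r (2 * x) (2 * y) := by
    intro x y hxy
    refine ⟨by omega, fun _ => ?_, fun h => by omega⟩
    simpa [Nat.mul_div_cancel_left] using hxy
  set ι : Quotient R → Quotient (joinSetoid R S) :=
    Quotient.lift (fun x => Quotient.mk _ (2 * x)) (fun x y hxy => Quotient.sound (wd x y hxy))
  have : Function.Injective ι := by
    intro a b
    induction a using Quotient.ind
    induction b using Quotient.ind
    rename_i x y
    intro hab
    obtain ⟨_, he, _⟩ := Quotient.exact hab
    apply Quotient.sound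
    simpa [Nat.mul_div_cancel_left] using he (by omega)
  exact Finite.of_injective ι this

lemma join_infinite_right {R S : Setoid ℕ} (hS : ¬ Finite (Quotient S)) :
    ¬ Finite (Quotient (joinSetoid R S)) := by
  intro hfin
  apply hS
  have hdiv : ∀ x : ℕ, (2 * x + 1) / 2 = x := fun x => by omega
  have wd : ∀ x y : ℕ, S.r x y → (joinSetoid R S).r (2 * x + 1) (2 * y + 1) := by
    intro x y hxy
    refine ⟨by omega, fun h => by omega, fun _ => ?_⟩
    rw [hdiv, hdiv]; exact hxy
  set ι : Quotient S → Quotient (joinSetoid R S) :=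
    Quotient.lift (fun x => Quotient.mk _ (2 * x + 1)) (fun x y hxy => Quotient.sound (wd x y hxy))
  have : Function.Injective ι := by
    intro a b
    induction a using Quotient.ind
    induction b using Quotient.ind
    rename_i x y
    intro hab
    obtain ⟨_, _, ho⟩ := Quotient.exact hab
    apply Quotient.sound
    have := ho (by omega)
    rwa [hdiv, hdiv] at this
  exact Finite.of_injective ι this

lemma join_not_reducible (R S : Setoid ℕ)
    (h1 : Dark R ∨ Finite (Quotient R)) (h2 : Dark S ∨ Finite (Quotient S)) :
    ¬ Reducible idSetoid (joinSetoid R S) := by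
  rintro ⟨f, hfc, hf⟩
  have hf' : ∀ x y : ℕ, x = y ↔ (joinSetoid R S).r (f x) (f y) := hf
  by_cases hinf : {x | f x % 2 = 0}.Infinite
  · have hE : ∀ n m : ℕ, n % 2 = 0 → m % 2 = 0 →
        ((joinSetoid R S).r n m ↔ R.r (n / 2) (m / 2)) := by
      intro n m hn hm
      constructor
      · rintro ⟨_, he, _⟩; exact he hn
      · intro h; exact ⟨hn.trans hm.symm, fun _ => h, fun h1 => by omega⟩
    obtain ⟨hred, hninf⟩ := reduce_side hfc hf' 0 hinf R hE
    rcases h1 with hd | hfin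
    · exact hd.2 hred
    · exact hninf hfin
  · have hinf1 : {x | f x % 2 = 1}.Infinite := by
      have := (Set.not_infinite.1 hinf).infinite_compl
      convert this using 1
      ext x
      simp only [Set.mem_compl_iff, Set.mem_setOf_eq]
      omega
    have hE : ∀ n m : ℕ, n % 2 = 1 → m % 2 = 1 →
        ((joinSetoid R S).r n m ↔ S.r (n / 2) (m / 2)) := by
      intro n m hn hm
      constructor
      · rintro ⟨_, _, ho⟩; exact ho hn
      · intro h; exact ⟨hn.trans hm.symm, fun h0 => by omega, fun _ => h⟩
    obtain ⟨hred, hninf⟩ := reduce_side hfc hf' 1 hinf1 S hE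
    rcases h2 with hd | hfin
    · exact hd.2 hred
    · exact hninf hfin


/-- The class of dark-or-finite ceers is closed under uniform join. -/
theorem stmt_17 (R S : Setoid ℕ) (hR : Ceer R) (hS : Ceer S)
    (h1 : Dark R ∨ Finite (Quotient R)) (h2 : Dark S ∨ Finite (Quotient S)) :
    Dark (joinSetoid R S) ∨ Finite (Quotient (joinSetoid R S)) := by
  by_cases hfR : Finite (Quotient R)
  · by_cases hfS : Finite (Quotient S)
    · exact Or.inr (join_finite hfR hfS)
    · exact Or.inl ⟨join_infinite_right hfS, join_not_reducible R S h1 h2⟩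
  · exact Or.inl ⟨join_infinite_left hfR, join_not_reducible R S h1 h2⟩
end

section
/- Let X be an equivalence relation on ℕ and consider the morphisms α, β : X → X ⊕ Id₁ induced by ev(x) = 2x and the constant function odd(x) = 1. The coequalizer of α and β in Eq is (isomorphic to) Id₁, the one-class equivalence relation. -/
/-- The one-class equivalence relation `Id₁` on ℕ. -/
def id1Setoid : Setoid ℕ :=
  ⟨fun _ _ => True, ⟨fun _ => trivial, fun _ => trivial, fun _ _ => trivial⟩⟩

/-- The coequalizer in `Eq` of the morphisms `X → X ⊕ Id₁` induced by `ev x = 2x` and the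
constant function `1` is the one-class relation: the generated relation identifies every
`2x` with `1`, collapsing everything to one class, so it is isomorphic to `Id₁` in `Eq`. -/
theorem stmt_19 (X : Setoid ℕ) :
    (∀ a b : ℕ,
      (genSetoid (coeqRel (joinSetoid X id1Setoid) (fun x => 2 * x) (fun _ => 1))).r a b) ∧
    ∃ (φ : Quotient (genSetoid (coeqRel (joinSetoid X id1Setoid) (fun x => 2 * x) (fun _ => 1))) →
        Quotient id1Setoid)
      (ψ : Quotient id1Setoid →
        Quotient (genSetoid (coeqRel (joinSetoid X id1Setoid) (fun x => 2 * x) (fun _ => 1)))),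
      IsMor _ id1Setoid φ ∧ IsMor id1Setoid _ ψ ∧ ψ ∘ φ = id ∧ φ ∘ ψ = id := by
  have key : ∀ n : ℕ,
      (genSetoid (coeqRel (joinSetoid X id1Setoid) (fun x => 2 * x) (fun _ => 1))).r n 1 := by
    intro n
    rcases Nat.even_or_odd n with ⟨k, hk⟩ | ⟨k, hk⟩
    · exact Relation.EqvGen.rel _ _ (Or.inr ⟨k, show n = 2 * k by omega, rfl⟩)
    · refine Relation.EqvGen.rel _ _ (Or.inl ?_)
      refine ⟨by omega, by omega, fun _ => trivial⟩
  have hall : ∀ a b : ℕ,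
      (genSetoid (coeqRel (joinSetoid X id1Setoid) (fun x => 2 * x) (fun _ => 1))).r a b :=
    fun a b => Relation.EqvGen.trans _ _ _ (key a) (Relation.EqvGen.symm _ _ (key b))
  refine ⟨hall, Quotient.lift (fun n => Quotient.mk id1Setoid n) (fun _ _ _ => Quotient.sound trivial),
    Quotient.lift (fun n => Quotient.mk _ n) (fun a b _ => Quotient.sound (hall a b)), ?_, ?_, ?_, ?_⟩
  · exact ⟨id, Computable.id, fun _ _ _ => trivial, fun _ => rfl⟩
  · exact ⟨id, Computable.id, fun a b _ => hall a b, fun _ => rfl⟩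
  · funext q; induction q using Quotient.ind; rfl
  · funext q; induction q using Quotient.ind; rfl
end
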